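/- Let (Ω,F,P) be a complete probability space and let B ∈ F ⊗ B([0,∞)). Then the map (ω,t) ↦ τ_B(ω,t) from Ω × [0,∞) to [0,∞] is F ⊗ B([0,∞))/B([0,∞])-measurable; in particular, for every fixed t ∈ [0,∞) the map ω ↦ τ_B(ω,t) is F-measurable. -/

import Mathlib

open MeasureTheory
open scoped NNReal ENNReal Topology

open Set

namespace DebutAux

/-- Initial segment of length `n` of `σ`. -/
def seg (σ : ℕ → ℕ) (n : ℕ) : List ℕ := List.ofFn fun i : Fin n => σ i

@[simp] lemma seg_zero (σ : ℕ → ℕ) : seg σ 0 = [] := rfl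

lemma seg_succ (σ : ℕ → ℕ) (n : ℕ) : seg σ (n + 1) = seg σ n ++ [σ n] := by
  rw [seg, seg, List.ofFn_succ', List.concat_eq_append]
  rfl

lemma seg_cons (i : ℕ) (σ : ℕ → ℕ) (n : ℕ) :
    seg (fun m => Nat.rec i (fun k _ => σ k) m) (n + 1) = i :: seg σ n := by
  simp only [seg, List.ofFn_succ]
  rfl

lemma length_seg (σ : ℕ → ℕ) (n : ℕ) : (seg σ n).length = n := by simp [seg]

lemma seg_getD (σ : ℕ → ℕ) {n i : ℕ} (h : i < n) : (seg σ n).getD i 0 = σ i := by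
  rw [List.getD_eq_getElem _ _ (by simpa [length_seg] using h)]
  simp [seg]

/-- The result of the Suslin operation on the scheme `A`. -/
def susl {X : Type*} (A : List ℕ → Set X) : Set X :=
  ⋃ σ : ℕ → ℕ, ⋂ n : ℕ, A (seg σ n)

lemma mem_susl {X : Type*} {A : List ℕ → Set X} {x : X} :
    x ∈ susl A ↔ ∃ σ : ℕ → ℕ, ∀ n, x ∈ A (seg σ n) := by
  simp [susl]

/-- `S` can be obtained by a Suslin scheme with values in the paving `p`. -/
def SuslinIn {X : Type*} (p : Set (Set X)) (S : Set X) : Prop :=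
  ∃ A : List ℕ → Set X, (∀ l, A l ∈ p) ∧ S = susl A

lemma SuslinIn.mono {X : Type*} {p q : Set (Set X)} (hpq : p ⊆ q) {S : Set X}
    (h : SuslinIn p S) : SuslinIn q S := by
  obtain ⟨A, hA, rfl⟩ := h; exact ⟨A, fun l => hpq (hA l), rfl⟩

lemma SuslinIn.of_mem {X : Type*} {p : Set (Set X)} {S : Set X} (h : S ∈ p) :
    SuslinIn p S :=
  ⟨fun _ => S, fun _ => h, by simp [susl, iInter_const, iUnion_const]⟩

lemma SuslinIn.iUnion {X : Type*} {p : Set (Set X)} (hu : univ ∈ p)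
    {S : ℕ → Set X} (h : ∀ i, SuslinIn p (S i)) : SuslinIn p (⋃ i, S i) := by
  choose A hA hS using h
  refine ⟨fun l => match l with
    | [] => univ
    | i :: t => A i t, fun l => by cases l <;> [exact hu; exact hA _ _], ?_⟩
  ext x
  simp only [mem_iUnion, mem_susl]
  constructor
  · rintro ⟨i, hx⟩
    rw [hS i, mem_susl] at hx
    obtain ⟨σ, hσ⟩ := hx
    refine ⟨fun n => Nat.rec i (fun m _ => σ m) n, fun n => ?_⟩
    cases n with
    | zero => simp
    | succ n =>
      rw [seg_cons]
      exact hσ n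
  · rintro ⟨σ, hσ⟩
    refine ⟨σ 0, ?_⟩
    rw [hS (σ 0), mem_susl]
    refine ⟨fun n => σ (n + 1), fun n => ?_⟩
    have : seg σ (n + 1) = σ 0 :: seg (fun m => σ (m + 1)) n := by
      simp only [seg, List.ofFn_succ]; rfl
    have h2 := hσ (n + 1)
    rw [this] at h2
    exact h2

lemma biInter_mem_paving {X : Type*} {p : Set (Set X)} (hu : univ ∈ p)
    (hp : ∀ s t, s ∈ p → t ∈ p → s ∩ t ∈ p) (s : Finset ℕ) (f : ℕ → Set X)
    (hf : ∀ i ∈ s, f i ∈ p) : (⋂ i ∈ s, f i) ∈ p := by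
  classical
  induction s using Finset.induction with
  | empty => simpa using hu
  | @insert a s ha ih =>
    rw [Finset.set_biInter_insert]
    exact hp _ _ (hf _ (Finset.mem_insert_self _ _))
      (ih fun i hi => hf i (Finset.mem_insert_of_mem hi))

lemma SuslinIn.iInter {X : Type*} {p : Set (Set X)} (hu : univ ∈ p)
    (hp : ∀ s t, s ∈ p → t ∈ p → s ∩ t ∈ p)
    {S : ℕ → Set X} (h : ∀ i, SuslinIn p (S i)) : SuslinIn p (⋂ i, S i) := by
  classical
  choose A hA hS using h
  refine ⟨fun l =>
    (⋂ i ∈ Finset.range l.length, A i []) ∩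
      ⋂ k ∈ Finset.range l.length,
        (if ∀ j ≤ (Nat.unpair k).2, Nat.pair (Nat.unpair k).1 j < l.length
          then A (Nat.unpair k).1
            (List.ofFn fun j : Fin ((Nat.unpair k).2 + 1) =>
              l.getD (Nat.pair (Nat.unpair k).1 j) 0)
          else univ),
    fun l => hp _ _ (biInter_mem_paving hu hp _ _ fun i _ => hA i [])
    (biInter_mem_paving hu hp _ _ fun k _ => by split; exacts [hA _ _, hu]), ?_⟩
  ext x
  simp only [mem_iInter]
  constructor
  · intro hx
    rw [mem_susl]
    have key : ∀ i, ∃ τ : ℕ → ℕ, ∀ m, x ∈ A i (seg τ m) := fun i => by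
      have := hx i; rwa [hS i, mem_susl] at this
    choose τ hτ using key
    set σ : ℕ → ℕ := fun k => τ (Nat.unpair k).1 (Nat.unpair k).2 with hσ
    refine ⟨σ, fun n => ?_⟩
    refine ⟨?_, ?_⟩
    · simp only [mem_iInter]
      intro i _
      simpa [show seg (τ i) 0 = [] from rfl] using hτ i 0
    · simp only [mem_iInter]
      intro k _
      split
      case isTrue hcond =>
        have hlist : (List.ofFn fun j : Fin ((Nat.unpair k).2 + 1) =>
            (seg σ n).getD (Nat.pair (Nat.unpair k).1 j) 0)
            = seg (τ (Nat.unpair k).1) ((Nat.unpair k).2 + 1) := by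
          show _ = List.ofFn _
          congr 1
          funext j
          have hlt : Nat.pair (Nat.unpair k).1 (j : ℕ) < n := by
            simpa [length_seg] using hcond (j : ℕ) (by omega)
          exact (seg_getD σ hlt).trans (by simp [hσ, Nat.unpair_pair])
        rw [hlist]
        exact hτ _ _
      case isFalse => exact mem_univ x
  · intro hx i
    rw [mem_susl] at hx
    obtain ⟨σ, hσ⟩ := hx
    rw [hS i, mem_susl]
    refine ⟨fun j => σ (Nat.pair i j), fun m => ?_⟩
    cases m with
    | zero =>
      have := (hσ (i + 1)).1
      simp only [mem_iInter] at this
      have h0 := this i (by simp [length_seg])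
      simpa [show seg (fun j => σ (Nat.pair i j)) 0 = [] from rfl] using h0
    | succ m =>
      set N := max (Nat.pair i m) ((Finset.range (m + 1)).sup fun j => Nat.pair i j) + 1 with hN
      have h2 := (hσ N).2
      simp only [mem_iInter] at h2
      have hkmem : Nat.pair i m ∈ Finset.range (seg σ N).length := by
        simp [length_seg, hN]
      have h3 := h2 (Nat.pair i m) hkmem
      have hm1 : (Nat.unpair (Nat.pair i m)).1 = i := by simp
      have hm2 : (Nat.unpair (Nat.pair i m)).2 = m := by simp
      rw [if_pos] at h3
      · have hlist : (List.ofFn fun j : Fin ((Nat.unpair (Nat.pair i m)).2 + 1) =>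
            (seg σ N).getD (Nat.pair (Nat.unpair (Nat.pair i m)).1 j) 0)
            = seg (fun j => σ (Nat.pair (Nat.unpair (Nat.pair i m)).1 j))
                ((Nat.unpair (Nat.pair i m)).2 + 1) := by
          show _ = List.ofFn _
          congr 1
          funext j
          have hj : (j : ℕ) < m + 1 := by
            have := j.isLt; omega
          have hlt : Nat.pair (Nat.unpair (Nat.pair i m)).1 (j : ℕ) < N := by
            rw [hm1]
            have : Nat.pair i (j : ℕ) ≤ (Finset.range (m + 1)).sup fun j => Nat.pair i j :=
              Finset.le_sup (Finset.mem_range.mpr hj)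
            omega
          exact seg_getD σ hlt
        rw [hlist, hm1, hm2] at h3
        exact h3
      · intro j hj
        simp only [Nat.unpair_pair] at hj ⊢
        have : Nat.pair i j ≤ (Finset.range (m + 1)).sup fun j => Nat.pair i j :=
          Finset.le_sup (Finset.mem_range.mpr (by omega))
        simp only [length_seg]
        omega

lemma geom_bound (ε : ENNReal) (n : ℕ) : ∑ k ∈ Finset.range n, ε / 2 ^ (k+1) ≤ ε := by
  refine (ENNReal.sum_le_tsum _).trans ?_
  have key : ∀ k : ℕ, ε / 2 ^ (k + 1) = ε * 2⁻¹ * (2⁻¹ : ENNReal) ^ k := by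
    intro k
    rw [div_eq_mul_inv, ← ENNReal.inv_pow, pow_succ', ENNReal.mul_inv (by norm_num) (by norm_num),
      ENNReal.inv_pow, ← ENNReal.inv_pow, ← mul_assoc]
  have : ∑' k : ℕ, ε / 2 ^ (k + 1) = ε := by
    simp_rw [key]
    rw [ENNReal.tsum_mul_left, ENNReal.tsum_geometric,
      ENNReal.one_sub_inv_two, inv_inv, mul_assoc,
      ENNReal.inv_mul_cancel (by norm_num) (by norm_num), mul_one]
  exact this.le

/-- Łuzin–Sierpiński: the result of the Suslin operation on a regular scheme of measurable
sets is measurable, provided the measure is complete and finite. -/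
theorem measurableSet_susl {X : Type*} [MeasurableSpace X] (μ : Measure X) [IsFiniteMeasure μ]
    (hc : μ.IsComplete) {A : List ℕ → Set X} (hA : ∀ l, MeasurableSet (A l))
    (hreg : ∀ l i, A (l ++ [i]) ⊆ A l) : MeasurableSet (susl A) := by
  classical
  set Rl : List ℕ → Set X := fun l =>
    {x | ∃ σ : ℕ → ℕ, (∀ i, i < l.length → σ i ≤ l.getD i 0) ∧ ∀ n, x ∈ A (seg σ n)} with hRl
  have hRnil : Rl [] = susl A := by
    ext x; simp [hRl, mem_susl]
  have hRsub : ∀ l (j : ℕ), Rl (l ++ [j]) ⊆ Rl l := by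
    rintro l j x ⟨σ, hb, hx⟩
    refine ⟨σ, fun i hi => ?_, hx⟩
    have := hb i (by simp; omega)
    rwa [List.getD_append _ _ _ _ hi] at this
  have hRunion : ∀ l, Rl l = ⋃ j : ℕ, Rl (l ++ [j]) := by
    intro l
    ext x
    simp only [mem_iUnion]
    constructor
    · rintro ⟨σ, hb, hx⟩
      refine ⟨σ l.length, σ, fun i hi => ?_, hx⟩
      simp only [List.length_append, List.length_singleton] at hi
      rcases Nat.lt_or_ge i l.length with h | h
      · rw [List.getD_append _ _ _ _ h]; exact hb i h
      · have hi' : i = l.length := by omega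
        subst hi'
        rw [List.getD_eq_getElem _ _ (by simp),
          List.getElem_concat_length rfl (by simp)]
    · rintro ⟨j, hj⟩
      exact hRsub l j hj
  have hRmono : ∀ l, Monotone fun j => Rl (l ++ [j]) := by
    intro l j j' hjj'
    rintro x ⟨σ, hb, hx⟩
    refine ⟨σ, fun i hi => ?_, hx⟩
    simp only [List.length_append, List.length_singleton] at hi
    have := hb i (by simp only [List.length_append, List.length_singleton]; omega)
    rcases Nat.lt_or_ge i l.length with h | h
    · rwa [List.getD_append _ _ _ _ h] at this ⊢
    · have hi' : i = l.length := by omega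
      subst hi'
      rw [List.getD_eq_getElem _ _ (by simp),
        List.getElem_concat_length rfl (by simp)] at this ⊢
      omega
  -- the inner approximation
  have main : ∀ ε : ℝ≥0∞, ε ≠ 0 → ∃ C, MeasurableSet C ∧ C ⊆ susl A ∧ μ (susl A) ≤ μ C + ε := by
    intro ε hε
    have step : ∀ l : List ℕ, ∃ j : ℕ,
        μ (Rl l) ≤ μ (Rl (l ++ [j])) + ε / 2 ^ (l.length + 1) := by
      intro l
      by_cases h0 : μ (Rl l) = 0
      · exact ⟨0, by simp [h0]⟩
      have hsup : μ (Rl l) = ⨆ j : ℕ, μ (Rl (l ++ [j])) := by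
        conv_lhs => rw [hRunion l]
        exact (hRmono l).measure_iUnion
      have hδ : (ε / 2 ^ (l.length + 1)) ≠ 0 :=
        (ENNReal.div_pos hε (ENNReal.pow_ne_top ENNReal.ofNat_ne_top)).ne'
      have hlt : μ (Rl l) - ε / 2 ^ (l.length + 1) < ⨆ j : ℕ, μ (Rl (l ++ [j])) := by
        rw [← hsup]
        exact ENNReal.sub_lt_self (measure_ne_top μ _) h0 hδ
      obtain ⟨j, hj⟩ := lt_iSup_iff.mp hlt
      exact ⟨j, le_tsub_add.trans (add_le_add_left hj.le _)⟩
    choose Fc hFc using step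
    set L : ℕ → List ℕ := fun n => Nat.rec [] (fun _ l => l ++ [Fc l]) n with hLdef
    have hLsucc : ∀ n, L (n + 1) = L n ++ [Fc (L n)] := fun n => rfl
    have hLlen : ∀ n, (L n).length = n := by
      intro n
      induction n with
      | zero => rfl
      | succ n ih => rw [hLsucc, List.length_append, ih]; rfl
    have hchain : ∀ n, μ (susl A) ≤ μ (Rl (L n)) + ∑ k ∈ Finset.range n, ε / 2 ^ (k + 1) := by
      intro n
      induction n with
      | zero =>
        simp only [Finset.range_zero, Finset.sum_empty, add_zero]
        exact le_of_eq (by rw [show L 0 = [] from rfl] at *; rw [hRnil])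
      | succ n ih =>
        refine ih.trans ?_
        have h1 := hFc (L n)
        rw [hLlen n, ← hLsucc n] at h1
        rw [Finset.sum_range_succ]
        calc μ (Rl (L n)) + ∑ k ∈ Finset.range n, ε / 2 ^ (k + 1)
            ≤ (μ (Rl (L (n + 1))) + ε / 2 ^ (n + 1)) + ∑ k ∈ Finset.range n, ε / 2 ^ (k + 1) :=
              add_le_add_left h1 _
          _ = μ (Rl (L (n + 1))) + (∑ k ∈ Finset.range n, ε / 2 ^ (k + 1) + ε / 2 ^ (n + 1)) := by
              ring
    -- measurable approximants
    set At : ℕ → Set X := fun n =>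
      ⋃ v : (i : Fin n) → Fin ((L n).getD i 0 + 1), A (List.ofFn fun i => (v i : ℕ)) with hAt
    have hAtm : ∀ n, MeasurableSet (At n) := fun n => MeasurableSet.iUnion fun v => hA _
    have hGsub : ∀ n, Rl (L n) ⊆ At n := by
      rintro n x ⟨σ, hb, hx⟩
      refine mem_iUnion.mpr ⟨fun i => ⟨σ i, Nat.lt_succ_of_le (hb i ?_)⟩, hx n⟩
      rw [hLlen]; exact i.isLt
    -- prefix stability of L
    have hpre : ∀ m n, m ≤ n → L m <+: L n := by
      intro m n hmn
      induction n with
      | zero => rw [Nat.le_zero.mp hmn]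
      | succ n ih =>
        rcases Nat.lt_or_ge m (n + 1) with h | h
        · exact (ih (by omega)).trans ⟨[Fc (L n)], (hLsucc n).symm⟩
        · have : m = n + 1 := by omega
          subst this
          exact List.prefix_refl _
    set kk : ℕ → ℕ := fun i => (L (i + 1)).getD i 0 with hkk
    have hgetD : ∀ i n, i < n → (L n).getD i 0 = kk i := by
      intro i n hin
      have hp := hpre (i + 1) n hin
      show (L n).getD i 0 = (L (i + 1)).getD i 0
      rw [List.getD_eq_getElem _ _ (by rw [hLlen n]; omega),
        List.getD_eq_getElem _ _ (by rw [hLlen (i + 1)]; omega)]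
      exact (hp.getElem (by rw [hLlen (i + 1)]; omega)).symm
    -- König via compactness: ⋂ At ⊆ susl A
    have claim2 : (⋂ n, At n) ⊆ susl A := by
      intro x hx
      rw [mem_iInter] at hx
      set K : Set (ℕ → ℕ) := univ.pi fun i => Iic (kk i) with hK
      set Fn : ℕ → Set (ℕ → ℕ) := fun n => K ∩ {σ | x ∈ A (seg σ n)} with hFn
      have hKc : IsCompact K := isCompact_univ_pi fun i => (finite_Iic _).isCompact
      have hcl : ∀ n, IsClosed (Fn n) := by
        intro n
        refine IsClosed.inter (isClosed_set_pi fun a _ => isClosed_discrete _) ?_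
        have he : {σ : ℕ → ℕ | x ∈ A (seg σ n)} =
            (fun σ : ℕ → ℕ => fun i : Fin n => σ i) ⁻¹' {f : Fin n → ℕ | x ∈ A (List.ofFn f)} :=
          rfl
        rw [he]
        exact (isClosed_discrete _).preimage (continuous_pi fun i => continuous_apply _)
      have hdec : ∀ n, Fn (n + 1) ⊆ Fn n := by
        rintro n σ ⟨h1, h2⟩
        refine ⟨h1, ?_⟩
        have h2' : x ∈ A (seg σ n ++ [σ n]) := by rw [← seg_succ]; exact h2
        exact hreg _ _ h2'
      have hne : ∀ n, (Fn n).Nonempty := by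
        intro n
        obtain ⟨v, hv⟩ := mem_iUnion.mp (hx n)
        refine ⟨fun i => if h : i < n then (v ⟨i, h⟩ : ℕ) else 0, ⟨?_, ?_⟩⟩
        · intro i _
          simp only [mem_Iic]
          by_cases h : i < n
          · rw [dif_pos h]
            have h1 : (v ⟨i, h⟩ : ℕ) ≤ (L n).getD i 0 := Nat.lt_succ_iff.mp (v ⟨i, h⟩).isLt
            have h2 := hgetD i n h
            omega
          · rw [dif_neg h]; exact Nat.zero_le _
        · have hseg : seg (fun i => if h : i < n then (v ⟨i, h⟩ : ℕ) else 0) n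
              = List.ofFn fun i : Fin n => (v i : ℕ) := by
            rw [seg]
            congr 1
            funext i
            rw [dif_pos i.isLt]
          show x ∈ A (seg _ n)
          rw [hseg]
          exact hv
      obtain ⟨σ, hσ⟩ := IsCompact.nonempty_iInter_of_sequence_nonempty_isCompact_isClosed
        Fn hdec hne (hKc.of_isClosed_subset (hcl 0) inter_subset_left) hcl
      rw [mem_iInter] at hσ
      exact mem_susl.mpr ⟨σ, fun n => (hσ n).2⟩
    -- accumulate
    set Acc : ℕ → Set X := fun n => ⋂ m ∈ Finset.range (n + 1), At m with hAcc
    have hAccm : ∀ n, MeasurableSet (Acc n) :=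
      fun n => MeasurableSet.biInter (Finset.range (n + 1)).countable_toSet fun m _ => hAtm m
    have hAccdec : Antitone Acc := by
      intro m n hmn x hx
      simp only [hAcc, mem_iInter] at hx ⊢
      intro i hi
      exact hx i (Finset.mem_range.mpr (lt_of_lt_of_le (Finset.mem_range.mp hi) (by omega)))
    have hAccI : (⋂ n, Acc n) = ⋂ n, At n := by
      apply Subset.antisymm
      · intro x hx
        rw [mem_iInter] at hx ⊢
        intro n
        have := hx n
        rw [hAcc] at this
        simp only [mem_iInter] at this
        exact this n (by simp)
      · intro x hx
        rw [mem_iInter] at hx ⊢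
        intro n
        simp only [hAcc, mem_iInter]
        intro m _
        exact hx m
    have hRlL : ∀ m n, m ≤ n → Rl (L n) ⊆ Rl (L m) := by
      intro m n hmn
      induction n with
      | zero => rw [Nat.le_zero.mp hmn]
      | succ n ih =>
        rcases Nat.lt_or_ge m (n + 1) with h | h
        · exact (by rw [hLsucc]; exact hRsub _ _ : Rl (L (n + 1)) ⊆ Rl (L n)).trans
            (ih (by omega))
        · have : m = n + 1 := by omega
          subst this
          exact Subset.rfl
    have hbound : ∀ n, μ (susl A) ≤ μ (Acc n) + ε := by
      intro n
      refine (hchain n).trans ?_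
      have h1 : Rl (L n) ⊆ Acc n := by
        intro x hx
        simp only [hAcc, mem_iInter]
        intro m hm
        exact hGsub m (hRlL m n (by simpa using Nat.lt_succ_iff.mp (Finset.mem_range.mp hm)) hx)
      exact add_le_add (measure_mono h1) (geom_bound ε n)
    refine ⟨⋂ n, Acc n, MeasurableSet.iInter fun n => hAccm n, hAccI ▸ claim2, ?_⟩
    have hCm : μ (⋂ n, Acc n) = ⨅ n, μ (Acc n) :=
      hAccdec.measure_iInter (fun n => (hAccm n).nullMeasurableSet)
        ⟨0, measure_ne_top μ _⟩
    rw [hCm, ENNReal.iInf_add]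
    exact le_iInf fun n => hbound n
  -- conclude by completeness
  obtain ⟨Cs, hCsm, hCss, hCsb⟩ :
      ∃ Cs : ℕ → Set X, (∀ n, MeasurableSet (Cs n)) ∧ (∀ n, Cs n ⊆ susl A) ∧
        ∀ n, μ (susl A) ≤ μ (Cs n) + ((n : ℝ≥0∞) + 1)⁻¹ := by
    have h := fun n : ℕ => main ((n : ℝ≥0∞) + 1)⁻¹ (by simp)
    choose Cs h1 h2 h3 using h
    exact ⟨Cs, h1, h2, h3⟩
  set C : Set X := ⋃ n, Cs n with hC
  have hCm : MeasurableSet C := MeasurableSet.iUnion hCsm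
  have hCsub : C ⊆ susl A := iUnion_subset hCss
  have hle : μ (susl A) ≤ μ C := by
    refine ENNReal.le_of_forall_pos_le_add fun ε' hε' _ => ?_
    obtain ⟨n, hn⟩ := ENNReal.exists_inv_nat_lt (show (ε' : ℝ≥0∞) ≠ 0 by
      simpa using hε'.ne')
    refine (hCsb n).trans (add_le_add (measure_mono (subset_iUnion Cs n)) ?_)
    refine le_trans ?_ hn.le
    exact ENNReal.inv_le_inv.mpr (by simp)
  have hnull : μ (susl A \ C) = 0 := by
    have hsub2 : susl A \ C ⊆ toMeasurable μ (susl A) \ C :=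
      diff_subset_diff_left (subset_toMeasurable μ _)
    refine measure_mono_null hsub2 ?_
    rw [measure_diff (hCsub.trans (subset_toMeasurable μ _)) hCm.nullMeasurableSet
      (measure_ne_top μ _), measure_toMeasurable]
    exact tsub_eq_zero_of_le hle
  have : susl A = C ∪ (susl A \ C) := (union_diff_cancel hCsub).symm
  rw [this]
  exact hCm.union (hc.out _ hnull)



lemma take_seg (σ : ℕ → ℕ) (n m : ℕ) : (seg σ n).take m = seg σ (min m n) := by
  apply List.ext_getElem
  · simp [seg]
  · intro i h1 h2
    simp [seg, List.getElem_take]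

lemma SuslinIn.regular {X : Type*} {p : Set (Set X)}
    (hp : ∀ s t, s ∈ p → t ∈ p → s ∩ t ∈ p) (hu : univ ∈ p) {S : Set X}
    (h : SuslinIn p S) :
    ∃ A : List ℕ → Set X, (∀ l, A l ∈ p) ∧ (∀ l i, A (l ++ [i]) ⊆ A l) ∧ S = susl A := by
  obtain ⟨A, hA, rfl⟩ := h
  refine ⟨fun l => ⋂ m ∈ Finset.range (l.length + 1), A (l.take m),
    fun l => biInter_mem_paving hu hp _ _ fun m _ => hA _, ?_, ?_⟩
  · intro l i x hx
    simp only [mem_iInter] at hx ⊢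
    intro m hm
    have hm' : m ≤ l.length := Nat.lt_succ_iff.mp (Finset.mem_range.mp hm)
    rw [← List.take_append_of_le_length (l₂ := [i]) hm']
    exact hx m (Finset.mem_range.mpr (by simp; omega))
  · ext x
    rw [mem_susl, mem_susl]
    constructor
    · rintro ⟨σ, hσ⟩
      refine ⟨σ, fun n => ?_⟩
      simp only [mem_iInter]
      intro m hm
      have hm' : m ≤ n := by
        have := Finset.mem_range.mp hm
        rw [length_seg] at this
        omega
      rw [take_seg, min_eq_left hm']
      exact hσ m
    · rintro ⟨σ, hσ⟩
      refine ⟨σ, fun n => ?_⟩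
      have := hσ n
      simp only [mem_iInter] at this
      have h2 := this n (Finset.mem_range.mpr (by rw [length_seg]; omega))
      rwa [take_seg, min_self] at h2

/-- The paving of rectangles with measurable base and compact (or full) section. -/
def rectPaving (Ω : Type*) [MeasurableSpace Ω] : Set (Set (Ω × ℝ≥0)) :=
  {S | ∃ (A : Set Ω) (C : Set ℝ≥0), MeasurableSet A ∧ (IsCompact C ∨ C = univ) ∧ S = A ×ˢ C}

lemma univ_mem_rectPaving (Ω : Type*) [MeasurableSpace Ω] : univ ∈ rectPaving Ω :=
  ⟨univ, univ, MeasurableSet.univ, Or.inr rfl, (univ_prod_univ).symm⟩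

lemma inter_mem_rectPaving {Ω : Type*} [MeasurableSpace Ω] {s t : Set (Ω × ℝ≥0)}
    (hs : s ∈ rectPaving Ω) (ht : t ∈ rectPaving Ω) : s ∩ t ∈ rectPaving Ω := by
  obtain ⟨A, C, hA, hC, rfl⟩ := hs
  obtain ⟨A', C', hA', hC', rfl⟩ := ht
  refine ⟨A ∩ A', C ∩ C', hA.inter hA', ?_, prod_inter_prod⟩
  rcases hC with hC | rfl
  · rcases hC' with hC' | rfl
    · exact Or.inl (hC.inter_right hC'.isClosed)
    · rw [inter_univ]; exact Or.inl hC
  · rcases hC' with hC' | rfl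
    · rw [univ_inter]; exact Or.inl hC'
    · rw [inter_univ]; exact Or.inr rfl

lemma nonempty_iInter_compact_or_univ {C : ℕ → Set ℝ≥0}
    (hdec : ∀ n, C (n + 1) ⊆ C n) (hcu : ∀ n, IsCompact (C n) ∨ C n = univ)
    (hne : ∀ n, (C n).Nonempty) : (⋂ n, C n).Nonempty := by
  have hmono : ∀ m n, m ≤ n → C n ⊆ C m := by
    intro m n hmn
    induction n with
    | zero => rw [Nat.le_zero.mp hmn]
    | succ n ih =>
      rcases Nat.lt_or_ge m (n + 1) with h | h
      · exact (hdec n).trans (ih (by omega))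
      · have : m = n + 1 := by omega
        subst this; exact Subset.rfl
  by_cases hall : ∀ n, C n = univ
  · refine ⟨0, mem_iInter.mpr fun n => ?_⟩
    rw [hall n]; trivial
  push_neg at hall
  obtain ⟨n₀, hn₀⟩ := hall
  have hcomp : IsCompact (C n₀) := (hcu n₀).resolve_right hn₀
  have hcomp' : ∀ m, n₀ ≤ m → IsCompact (C m) := by
    intro m hm
    rcases hcu m with h | h
    · exact h
    · exfalso
      exact hn₀ (univ_subset_iff.mp (h ▸ hmono n₀ m hm))
  have key := IsCompact.nonempty_iInter_of_sequence_nonempty_isCompact_isClosed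
    (fun n => C (n₀ + n)) (fun n => hdec _) (fun n => hne _)
    (by simpa using hcomp' n₀ le_rfl)
    (fun n => (hcomp' _ (by omega)).isClosed)
  obtain ⟨t, ht⟩ := key
  rw [mem_iInter] at ht
  refine ⟨t, mem_iInter.mpr fun m => ?_⟩
  rcases le_or_gt m n₀ with h | h
  · exact hmono m n₀ h (by simpa using ht 0)
  · have : m = n₀ + (m - n₀) := by omega
    rw [this]
    exact ht (m - n₀)

/-- The measurable projection theorem, for Suslin sets over the rectangle paving. -/
theorem measurableSet_proj_of_suslin {Ω : Type*} [MeasurableSpace Ω] (μ : Measure Ω)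
    [IsFiniteMeasure μ] (hc : μ.IsComplete) {B : Set (Ω × ℝ≥0)}
    (hB : SuslinIn (rectPaving Ω) B) : MeasurableSet (Prod.fst '' B) := by
  obtain ⟨A, hA, hmono, rfl⟩ := hB.regular (fun s t => inter_mem_rectPaving)
    (univ_mem_rectPaving Ω)
  choose Al Cl hAlm hClcu hAeq using hA
  have hm : ∀ l, MeasurableSet (Prod.fst '' A l) := by
    intro l
    rw [hAeq l]
    by_cases h : (Cl l).Nonempty
    · rw [fst_image_prod _ h]; exact hAlm l
    · rw [not_nonempty_iff_eq_empty] at h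
      rw [h, prod_empty, image_empty]
      exact MeasurableSet.empty
  have heq : Prod.fst '' susl A = susl fun l => Prod.fst '' A l := by
    apply Subset.antisymm
    · rintro _ ⟨⟨ω, t⟩, hωt, rfl⟩
      rw [mem_susl] at hωt
      obtain ⟨σ, hσ⟩ := hωt
      exact mem_susl.mpr ⟨σ, fun n => ⟨(ω, t), hσ n, rfl⟩⟩
    · intro ω hω
      rw [mem_susl] at hω
      obtain ⟨σ, hσ⟩ := hω
      -- basic facts about the branch
      have hmem : ∀ n, ω ∈ Al (seg σ n) ∧ (Cl (seg σ n)).Nonempty := by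
        intro n
        obtain ⟨⟨ω', t'⟩, hp, he⟩ := hσ n
        rw [hAeq (seg σ n)] at hp
        cases he
        exact ⟨hp.1, ⟨t', hp.2⟩⟩
      have hdecA : ∀ n, A (seg σ (n + 1)) ⊆ A (seg σ n) := by
        intro n
        rw [seg_succ]
        exact hmono _ _
      have hdecC : ∀ n, Cl (seg σ (n + 1)) ⊆ Cl (seg σ n) := by
        intro n c hcmem
        have h1 : (ω, c) ∈ A (seg σ (n + 1)) := by
          rw [hAeq]
          exact ⟨(hmem (n + 1)).1, hcmem⟩
        have h2 := hdecA n h1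
        rw [hAeq] at h2
        exact h2.2
      obtain ⟨t, ht⟩ := nonempty_iInter_compact_or_univ hdecC
        (fun n => hClcu (seg σ n)) (fun n => (hmem n).2)
      rw [mem_iInter] at ht
      refine ⟨(ω, t), ?_, rfl⟩
      rw [mem_susl]
      refine ⟨σ, fun n => ?_⟩
      rw [hAeq]
      exact ⟨(hmem n).1, ht n⟩
  rw [heq]
  refine measurableSet_susl μ hc hm fun l i => image_mono (hmono l i)

/-- The paving of compact (or full) subsets of `ℝ≥0`. -/
def compPaving : Set (Set ℝ≥0) := {C | IsCompact C ∨ C = univ}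

lemma univ_mem_compPaving : univ ∈ compPaving := Or.inr rfl

lemma inter_mem_compPaving {s t : Set ℝ≥0} (hs : s ∈ compPaving) (ht : t ∈ compPaving) :
    s ∩ t ∈ compPaving := by
  rcases hs with hs | rfl
  · rcases ht with ht | rfl
    · exact Or.inl (hs.inter_right ht.isClosed)
    · rw [inter_univ]; exact Or.inl hs
  · rcases ht with ht | rfl
    · rw [univ_inter]; exact Or.inl ht
    · rw [inter_univ]; exact Or.inr rfl

lemma SuslinIn.union {X : Type*} {p : Set (Set X)} (hu : univ ∈ p) {s t : Set X}
    (hs : SuslinIn p s) (ht : SuslinIn p t) : SuslinIn p (s ∪ t) := by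
  have h : (⋃ i : ℕ, if i = 0 then s else t) = s ∪ t := by
    apply Subset.antisymm
    · refine iUnion_subset fun i => ?_
      split_ifs
      · exact subset_union_left
      · exact subset_union_right
    · refine union_subset ?_ ?_
      · exact subset_iUnion_of_subset 0 (by simp)
      · exact subset_iUnion_of_subset 1 (by simp)
  rw [← h]
  exact SuslinIn.iUnion hu fun i => by split_ifs <;> assumption

lemma suslinIn_of_isClosed {C : Set ℝ≥0} (hC : IsClosed C) : SuslinIn compPaving C := by
  have h : C = ⋃ n : ℕ, C ∩ Icc 0 n := by
    apply Subset.antisymm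
    · intro x hx
      obtain ⟨n, hn⟩ := exists_nat_ge x
      exact mem_iUnion.mpr ⟨n, hx, zero_le, hn⟩
    · exact iUnion_subset fun n => inter_subset_left
  rw [h]
  exact SuslinIn.iUnion univ_mem_compPaving fun n =>
    SuslinIn.of_mem (Or.inl (isCompact_Icc.inter_left hC))

lemma suslinIn_of_isOpen {U : Set ℝ≥0} (hU : IsOpen U) : SuslinIn compPaving U := by
  have hGδ : IsGδ Uᶜ := (isClosed_compl_iff.mpr hU).isGδ
  obtain ⟨T, hTopen, hTcount, hTeq⟩ := hGδ
  rcases eq_empty_or_nonempty T with rfl | hTne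
  · have : U = ∅ := by
      have : Uᶜ = univ := by rw [hTeq]; simp
      rw [← compl_compl U, this, compl_univ]
    rw [this]
    exact SuslinIn.of_mem (Or.inl isCompact_empty)
  · obtain ⟨f, hf⟩ := hTcount.exists_eq_range hTne
    have hUeq : U = ⋃ n : ℕ, (f n)ᶜ := by
      rw [← compl_compl U, hTeq, hf, sInter_range, compl_iInter]
    rw [hUeq]
    refine SuslinIn.iUnion univ_mem_compPaving fun n => suslinIn_of_isClosed ?_
    refine isClosed_compl_iff.mpr (hTopen _ ?_)
    rw [hf]; exact mem_range_self n
 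
lemma suslinIn_of_measurableSet {C : Set ℝ≥0} (hC : MeasurableSet C) :
    SuslinIn compPaving C ∧ SuslinIn compPaving Cᶜ := by
  have hb : MeasurableSet[MeasurableSpace.generateFrom {s : Set ℝ≥0 | IsOpen s}] C := by
    have he : (inferInstance : MeasurableSpace ℝ≥0) = borel ℝ≥0 := BorelSpace.measurable_eq
    rw [borel] at he
    rw [← he]
    exact hC
  refine MeasurableSpace.generateFrom_induction {s : Set ℝ≥0 | IsOpen s}
    (fun S _ => SuslinIn compPaving S ∧ SuslinIn compPaving Sᶜ) ?_ ?_ ?_ ?_ C hb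
  · intro t ht _
    exact ⟨suslinIn_of_isOpen ht, suslinIn_of_isClosed (isClosed_compl_iff.mpr ht)⟩
  · constructor
    · exact SuslinIn.of_mem (Or.inl isCompact_empty)
    · rw [compl_empty]; exact SuslinIn.of_mem univ_mem_compPaving
  · intro t _ h
    rw [compl_compl]
    exact ⟨h.2, h.1⟩
  · intro s _ h
    constructor
    · exact SuslinIn.iUnion univ_mem_compPaving fun n => (h n).1
    · rw [compl_iUnion]
      exact SuslinIn.iInter univ_mem_compPaving (fun a b ha hb => inter_mem_compPaving ha hb)
        fun n => (h n).2

lemma prod_susl {Ω : Type*} (A : Set Ω) (K : List ℕ → Set ℝ≥0) :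
    A ×ˢ susl K = susl fun l => A ×ˢ K l := by
  ext ⟨a, b⟩
  simp only [mem_prod, mem_susl]
  constructor
  · rintro ⟨hA, σ, hσ⟩
    exact ⟨σ, fun n => ⟨hA, hσ n⟩⟩
  · rintro ⟨σ, hσ⟩
    exact ⟨(hσ 0).1, σ, fun n => (hσ n).2⟩

lemma suslinIn_rect {Ω : Type*} [MeasurableSpace Ω] {A : Set Ω} (hA : MeasurableSet A)
    {C : Set ℝ≥0} (hC : SuslinIn compPaving C) : SuslinIn (rectPaving Ω) (A ×ˢ C) := by
  obtain ⟨K, hK, rfl⟩ := hC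
  exact ⟨fun l => A ×ˢ K l, fun l => ⟨A, K l, hA, hK l, rfl⟩, prod_susl A K⟩

lemma suslinIn_rectPaving_of_measurableSet {Ω : Type*} [MeasurableSpace Ω]
    {B : Set (Ω × ℝ≥0)} (hB : MeasurableSet B) : SuslinIn (rectPaving Ω) B := by
  have h : MeasurableSet[MeasurableSpace.generateFrom
      (image2 (· ×ˢ ·) {s : Set Ω | MeasurableSet s} {t : Set ℝ≥0 | MeasurableSet t})] B := by
    rw [generateFrom_prod]
    exact hB
  refine (MeasurableSpace.generateFrom_induction _
    (fun S _ => SuslinIn (rectPaving Ω) S ∧ SuslinIn (rectPaving Ω) Sᶜ) ?_ ?_ ?_ ?_ B h).1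
  · rintro T ⟨A, hA, C, hC, rfl⟩ _
    constructor
    · exact suslinIn_rect hA (suslinIn_of_measurableSet hC).1
    · rw [compl_prod_eq_union]
      exact SuslinIn.union (univ_mem_rectPaving Ω)
        (SuslinIn.of_mem ⟨Aᶜ, univ, hA.compl, Or.inr rfl, rfl⟩)
        (suslinIn_rect MeasurableSet.univ (suslinIn_of_measurableSet (MeasurableSet.compl (hC : MeasurableSet C))).1)
  · constructor
    · exact SuslinIn.of_mem ⟨∅, ∅, MeasurableSet.empty, Or.inl isCompact_empty, by simp⟩
    · rw [compl_empty]; exact SuslinIn.of_mem (univ_mem_rectPaving Ω)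
  · intro t _ h
    rw [compl_compl]
    exact ⟨h.2, h.1⟩
  · intro s _ h
    constructor
    · exact SuslinIn.iUnion (univ_mem_rectPaving Ω) fun n => (h n).1
    · rw [compl_iUnion]
      exact SuslinIn.iInter (univ_mem_rectPaving Ω)
        (fun a b ha hb => inter_mem_rectPaving ha hb) fun n => (h n).2

/-- **The measurable projection theorem** for `Ω × ℝ≥0` over a complete finite measure space. -/
theorem measurableSet_fst_image {Ω : Type*} [MeasurableSpace Ω] (μ : Measure Ω)
    [IsFiniteMeasure μ] (hc : μ.IsComplete) {B : Set (Ω × ℝ≥0)} (hB : MeasurableSet B) :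
    MeasurableSet (Prod.fst '' B) :=
  measurableSet_proj_of_suslin μ hc (suslinIn_rectPaving_of_measurableSet hB)

end DebutAux


/-- The reaching time (debut) of a set `B ⊆ Ω × [0,∞)`:
`τ_B(ω,t) = inf {s > t : (ω,s) ∈ B}`, valued in `[0,∞]`, with the convention `inf ∅ = ∞`. -/
noncomputable def reachingTime {Ω : Type*} (B : Set (Ω × ℝ≥0)) (ω : Ω) (t : ℝ≥0) : ℝ≥0∞ :=
  sInf {x : ℝ≥0∞ | ∃ s : ℝ≥0, x = (s : ℝ≥0∞) ∧ t < s ∧ (ω, s) ∈ B}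

/-- on a complete probability space, if `B ∈ F ⊗ B([0,∞))`, then
`(ω,t) ↦ τ_B(ω,t)` is `F ⊗ B([0,∞))/B([0,∞])`-measurable; in particular, for each fixed `t`
the map `ω ↦ τ_B(ω,t)` is `F`-measurable. -/
theorem stmt_2 {Ω : Type*} [MeasurableSpace Ω] (P : Measure Ω) [IsProbabilityMeasure P]
    [P.IsComplete] (B : Set (Ω × ℝ≥0)) (hB : MeasurableSet B) :
    Measurable (fun p : Ω × ℝ≥0 => reachingTime B p.1 p.2) ∧
      ∀ t : ℝ≥0, Measurable fun ω => reachingTime B ω t := by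
  have hlt : ∀ (ω : Ω) (t : ℝ≥0) (a : ℝ≥0∞),
      reachingTime B ω t < a ↔ ∃ s : ℝ≥0, t < s ∧ (ω, s) ∈ B ∧ (s : ℝ≥0∞) < a := by
    intro ω t a
    rw [reachingTime, sInf_lt_iff]
    constructor
    · rintro ⟨x, ⟨s, rfl, hts, hmem⟩, hxa⟩
      exact ⟨s, hts, hmem, hxa⟩
    · rintro ⟨s, hts, hmem, hsa⟩
      exact ⟨(s : ℝ≥0∞), ⟨s, rfl, hts, hmem⟩, hsa⟩
  set G : ℚ → ℝ≥0∞ → Set Ω := fun q a =>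
    Prod.fst '' (B ∩ (univ ×ˢ ({s : ℝ≥0 | Real.toNNReal q ≤ s} ∩
      ((↑) : ℝ≥0 → ℝ≥0∞) ⁻¹' Iio a))) with hG
  have hGm : ∀ q a, MeasurableSet (G q a) := by
    intro q a
    refine DebutAux.measurableSet_fst_image P ‹P.IsComplete› ?_
    refine hB.inter (MeasurableSet.prod MeasurableSet.univ (MeasurableSet.inter ?_ ?_))
    · exact measurableSet_Ici
    · exact measurable_coe_nnreal_ennreal measurableSet_Iio
  have hset : ∀ a : ℝ≥0∞,
      (fun p : Ω × ℝ≥0 => reachingTime B p.1 p.2) ⁻¹' Iio a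
        = ⋃ q : ℚ, (G q a) ×ˢ (Iio (Real.toNNReal q)) := by
    intro a
    ext ⟨ω, t⟩
    simp only [mem_preimage, mem_Iio, mem_iUnion, mem_prod]
    rw [hlt]
    constructor
    · rintro ⟨s, hts, hmem, hsa⟩
      obtain ⟨q, hq1, hq2⟩ := exists_rat_btwn (NNReal.coe_lt_coe.mpr hts)
      have hq0 : (0 : ℝ) < (q : ℝ) := lt_of_le_of_lt t.coe_nonneg hq1
      refine ⟨q, ⟨(ω, s), ⟨hmem, trivial, ?_, hsa⟩, rfl⟩, ?_⟩
      · exact Real.toNNReal_le_iff_le_coe.mpr hq2.le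
      · rw [show t = Real.toNNReal (t : ℝ) from (Real.toNNReal_coe).symm]
        exact (Real.toNNReal_lt_toNNReal_iff hq0).mpr hq1
    · rintro ⟨q, ⟨⟨ω', s⟩, ⟨hmem, _, hqs, hsa⟩, he⟩, htq⟩
      cases he
      refine ⟨s, ?_, hmem, hsa⟩
      exact lt_of_lt_of_le htq hqs
  have hjoint : Measurable (fun p : Ω × ℝ≥0 => reachingTime B p.1 p.2) := by
    refine measurable_of_Iio fun a => ?_
    rw [hset a]
    exact MeasurableSet.iUnion fun q => (hGm q a).prod measurableSet_Iio
  exact ⟨hjoint, fun t => hjoint.comp (measurable_prodMk_right)⟩
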